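/- Let h(x) = ⌊(x+1)²/3⌋ and let e : ℕ → ℝ be defined by e(0) = e(1) = 1 and, for x ≥ 1, e(x+1)·h(x+1) = 2·e(x)·(h(x)+1) − e(x−1)·h(x−1). Then there exists a constant c < 1/2 such that e(x)/x → c as x → ∞. -/

import Mathlib

/-!
With `h x = ⌊(x+1)²/3⌋`, the sequence `e : ℕ → ℝ` defined by `e 0 = e 1 = 1` and
`e(x+1)·h(x+1) = 2·e(x)·(h(x)+1) - e(x-1)·h(x-1)` for `x ≥ 1` satisfies
`e(x)/x → c` for some constant `c < 1/2`.
-/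

namespace Stmt15

/-- `h x = ⌊(x+1)²/3⌋`. -/
def hfun (x : ℕ) : ℕ := (x + 1) ^ 2 / 3

lemma hfA (m : ℕ) : hfun (3*m+1) = 3*(m*m)+4*m+1 := by
  unfold hfun; rw [show (3*m+1+1)^2 = 3*(3*(m*m)+4*m+1)+1 by ring]; omega
lemma hfB (m : ℕ) : hfun (3*m+2) = 3*(m*m)+6*m+3 := by
  unfold hfun; rw [show (3*m+2+1)^2 = 3*(3*(m*m)+6*m+3) by ring]; omega
lemma hfC (m : ℕ) : hfun (3*m+3) = 3*(m*m)+8*m+5 := by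
  unfold hfun; rw [show (3*m+3+1)^2 = 3*(3*(m*m)+8*m+5)+1 by ring]; omega
lemma hfD (m : ℕ) : hfun (3*m+4) = 3*(m*m)+10*m+8 := by
  unfold hfun; rw [show (3*m+4+1)^2 = 3*(3*(m*m)+10*m+8)+1 by ring]; omega
lemma hfE (m : ℕ) : hfun (3*m+5) = 3*(m*m)+12*m+12 := by
  unfold hfun; rw [show (3*m+5+1)^2 = 3*(3*(m*m)+12*m+12) by ring]; omega

/-- Weight function `Sf x = x² - [x ≡ 2 mod 3]`. -/
noncomputable def Sf (x : ℕ) : ℝ := (x:ℝ)^2 - (if x % 3 = 2 then 1 else 0)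

lemma Sf2 (n : ℕ) (h : n % 3 = 2) : Sf n = (n:ℝ)^2 - 1 := by simp [Sf, h]
lemma Sfn (n : ℕ) (h : n % 3 ≠ 2) : Sf n = (n:ℝ)^2 := by simp [Sf, h]

lemma Sf_pos (n : ℕ) (h : 2 ≤ n) : 0 < Sf n := by
  have : (2:ℝ) ≤ (n:ℝ) := by exact_mod_cast h
  unfold Sf; split <;> nlinarith

lemma hfun_pos (n : ℕ) (h : 2 ≤ n) : 0 < hfun n := by
  have h3 : 3 ≤ (n+1)^2 := by nlinarith
  unfold hfun; omega

lemma hmono (x : ℕ) (hx : 2 ≤ x) : hfun (x-1) + hfun (x+1) ≤ 2 * hfun x + 2 := by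
  obtain ⟨m, hm⟩ : ∃ m, x = 3*m+2 ∨ x = 3*m+3 ∨ x = 3*m+4 := ⟨(x-2)/3, by omega⟩
  rcases hm with h | h | h <;> subst h
  · rw [show 3*m+2-1 = 3*m+1 by omega, hfA, hfB, hfC]; omega
  · rw [show 3*m+3-1 = 3*m+2 by omega, hfB, hfC, hfD]; omega
  · rw [show 3*m+4-1 = 3*m+3 by omega, hfC, hfD, hfE]; omega

lemma key (x : ℕ) (hx : 2 ≤ x) :
    2*((x:ℝ)^2-1)*Sf x*((hfun x : ℝ)+1) ≤
      (x:ℝ)*((x:ℝ)+1)*Sf (x-1)*((hfun (x-1) : ℝ)) + (x:ℝ)*((x:ℝ)-1)*Sf (x+1)*((hfun (x+1) : ℝ)) := by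
  obtain ⟨m, hm⟩ : ∃ m, x = 3*m+2 ∨ x = 3*m+3 ∨ x = 3*m+4 := ⟨(x-2)/3, by omega⟩
  have hm0 : (0:ℝ) ≤ (m:ℝ) := Nat.cast_nonneg m
  rcases hm with h | h | h <;> subst h
  · rw [show 3*m+2-1 = 3*m+1 by omega, show 3*m+2+1 = 3*m+3 by omega, hfA, hfB, hfC,
      Sfn (3*m+1) (by omega), Sf2 (3*m+2) (by omega), Sfn (3*m+3) (by omega)]
    push_cast
    nlinarith [mul_nonneg (mul_nonneg hm0 hm0) hm0, mul_nonneg hm0 hm0]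
  · rw [show 3*m+3-1 = 3*m+2 by omega, show 3*m+3+1 = 3*m+4 by omega, hfB, hfC, hfD,
      Sf2 (3*m+2) (by omega), Sfn (3*m+3) (by omega), Sfn (3*m+4) (by omega)]
    push_cast
    nlinarith [mul_nonneg (mul_nonneg hm0 hm0) hm0, mul_nonneg hm0 hm0]
  · rw [show 3*m+4-1 = 3*m+3 by omega, show 3*m+4+1 = 3*m+5 by omega, hfC, hfD, hfE,
      Sfn (3*m+3) (by omega), Sfn (3*m+4) (by omega), Sf2 (3*m+5) (by omega)]
    push_cast
    nlinarith [mul_nonneg (mul_nonneg hm0 hm0) hm0, mul_nonneg hm0 hm0]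

set_option maxHeartbeats 1000000 in
theorem linear_growth_upper (e : ℕ → ℝ) (h0 : e 0 = 1) (h1 : e 1 = 1)
    (hrec : ∀ x : ℕ, 1 ≤ x →
      e (x + 1) * (hfun (x + 1) : ℝ) =
        2 * e x * ((hfun x : ℝ) + 1) - e (x - 1) * (hfun (x - 1) : ℝ)) :
    ∃ c : ℝ, c < 1 / 2 ∧
      Filter.Tendsto (fun x : ℕ => e x / (x : ℝ)) Filter.atTop (nhds c) := by
  have E2 : e 2 = (4/3 : ℝ) := by
    have h := hrec 1 (by norm_num)
    norm_num [hfun] at h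
    linarith [h, h1, h0]
  have E3 : e 3 = (29/15 : ℝ) := by
    have h := hrec 2 (by norm_num)
    norm_num [hfun] at h
    linarith [h, E2, h1]
  have E4 : e 4 = (12/5 : ℝ) := by
    have h := hrec 3 (by norm_num)
    norm_num [hfun] at h
    linarith [h, E3, E2]
  have E5 : e 5 = (503/180 : ℝ) := by
    have h := hrec 4 (by norm_num)
    norm_num [hfun] at h
    linarith [h, E4, E3]
  have E6 : e 6 = (4811/1440 : ℝ) := by
    have h := hrec 5 (by norm_num)
    norm_num [hfun] at h
    linarith [h, E5, E4]
  have E7 : e 7 = (57643/15120 : ℝ) := by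
    have h := hrec 6 (by norm_num)
    norm_num [hfun] at h
    linarith [h, E6, E5]
  have E8 : e 8 = (432011/102060 : ℝ) := by
    have h := hrec 7 (by norm_num)
    norm_num [hfun] at h
    linarith [h, E7, E6]
  have E9 : e 9 = (9155269/1924560 : ℝ) := by
    have h := hrec 8 (by norm_num)
    norm_num [hfun] at h
    linarith [h, E8, E7]
  have E10 : e 10 = (70455521/13471920 : ℝ) := by
    have h := hrec 9 (by norm_num)
    norm_num [hfun] at h
    linarith [h, E9, E8]
  have E11 : e 11 = (3662485583/646652160 : ℝ) := by
    have h := hrec 10 (by norm_num)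
    norm_num [hfun] at h
    linarith [h, E10, E9]
  have E12 : e 12 = (10165863037/1646023680 : ℝ) := by
    have h := hrec 11 (by norm_num)
    norm_num [hfun] at h
    linarith [h, E11, E10]
  have E13 : e 13 = (1304268604141/196151155200 : ℝ) := by
    have h := hrec 12 (by norm_num)
    norm_num [hfun] at h
    linarith [h, E12, E11]
  have E14 : e 14 = (3556474877717/501522840000 : ℝ) := by
    have h := hrec 13 (by norm_num)
    norm_num [hfun] at h
    linarith [h, E13, E12]
  have E15 : e 15 = (28496479628780467/3751390843200000 : ℝ) := by
    have h := hrec 14 (by norm_num)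
    norm_num [hfun] at h
    linarith [h, E14, E13]
  have E16 : e 16 = (726553022437750831/90033380236800000 : ℝ) := by
    have h := hrec 15 (by norm_num)
    norm_num [hfun] at h
    linarith [h, E15, E14]
  have E17 : e 17 = (41409233955105754267/4861802532787200000 : ℝ) := by
    have h := hrec 16 (by norm_num)
    norm_num [hfun] at h
    linarith [h, E16, E15]
  have E18 : e 18 = (2630381066947877061151/291708151967232000000 : ℝ) := by
    have h := hrec 17 (by norm_num)
    norm_num [hfun] at h
    linarith [h, E17, E16]
  have E19 : e 19 = (184110191086150480574191/19398592105820928000000 : ℝ) := by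
    have h := hrec 18 (by norm_num)
    norm_num [hfun] at h
    linarith [h, E18, E17]
  have E20 : e 20 = (885971571776383432684319/89112282486114888000000 : ℝ) := by
    have h := hrec 19 (by norm_num)
    norm_num [hfun] at h
    linarith [h, E19, E18]
  -- the inductive invariant from x = 19 on
  have main : ∀ x : ℕ, 19 ≤ x → 0 < e x ∧ e x ≤ e (x+1) ∧
      e (x+1) * Sf x * ((x:ℝ)+1) ≤ e x * Sf (x+1) * (x:ℝ) := by
    intro x hx
    induction x, hx using Nat.le_induction with
    | base =>
      rw [show (19:ℕ)+1 = 20 from rfl]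
      refine ⟨by rw [E19]; norm_num, by rw [E19, E20]; norm_num, ?_⟩
      rw [E19, E20, Sfn 19 (by norm_num), Sf2 20 (by norm_num)]
      norm_num
    | succ x hx ih =>
      obtain ⟨hpos, hmon, hinv⟩ := ih
      have hx2 : 2 ≤ x := by omega
      have hb : 0 < e (x+1) := lt_of_lt_of_le hpos hmon
      have hrec' := hrec (x+1) (by omega)
      rw [show x+1-1 = x from rfl] at hrec'
      have hXpos : (0:ℝ) < (x:ℝ) := by exact_mod_cast (by omega : 0 < x)
      have hX2 : (2:ℝ) ≤ (x:ℝ) := by exact_mod_cast hx2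
      have hfp : (0:ℝ) < (hfun (x+2) : ℝ) := by exact_mod_cast hfun_pos (x+2) (by omega)
      have hf0 : (0:ℝ) ≤ (hfun x : ℝ) := Nat.cast_nonneg _
      have hmono2 : (hfun x : ℝ) + (hfun (x+2) : ℝ) ≤ 2*(hfun (x+1):ℝ) + 2 := by
        have h := hmono (x+1) (by omega)
        rw [show x+1-1 = x from rfl, show x+1+1 = x+2 from rfl] at h
        exact_mod_cast h
      -- monotone step
      have p1 : 0 ≤ (e (x+1) - e x) * (hfun x : ℝ) := mul_nonneg (by linarith) hf0
      have p2 : 0 ≤ e (x+1) * (2*(hfun (x+1):ℝ) + 2 - (hfun x:ℝ) - (hfun (x+2):ℝ)) :=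
        mul_nonneg hb.le (by linarith)
      have q : 0 ≤ (e (x+2) - e (x+1)) * (hfun (x+2):ℝ) := by linarith [hrec', p1, p2]
      have step_mono : e (x+1) ≤ e (x+2) := by nlinarith [q, hfp]
      -- invariant step
      have K := key (x+1) (by omega)
      rw [show x+1-1 = x from rfl, show x+1+1 = x+2 from rfl] at K
      push_cast at K
      have t1 : e (x+2) * Sf (x+1) * ((x:ℝ)+2) * ((hfun (x+2):ℝ) * (((x:ℝ)+1)*(x:ℝ)))
          = (2 * e (x+1) * ((hfun (x+1):ℝ)+1) - e x * (hfun x:ℝ))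
              * (Sf (x+1)*((x:ℝ)+2)*((x:ℝ)+1)*(x:ℝ)) := by
        linear_combination (Sf (x+1)*((x:ℝ)+2)*((x:ℝ)+1)*(x:ℝ)) * hrec'
      have c2nn : (0:ℝ) ≤ ((x:ℝ)+2)*((x:ℝ)+1)*(hfun x:ℝ) := by positivity
      have t2 : ((x:ℝ)+2)*((x:ℝ)+1)*(hfun x:ℝ) * (e (x+1) * Sf x * ((x:ℝ)+1))
          ≤ ((x:ℝ)+2)*((x:ℝ)+1)*(hfun x:ℝ) * (e x * Sf (x+1) * (x:ℝ)) :=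
        mul_le_mul_of_nonneg_left hinv c2nn
      have c3nn : (0:ℝ) ≤ e (x+1) * ((x:ℝ)+1) := mul_nonneg hb.le (by linarith)
      have t3 : (e (x+1) * ((x:ℝ)+1)) *
            (2*((hfun (x+1):ℝ)+1)*Sf (x+1)*((x:ℝ)+2)*(x:ℝ)
              - ((x:ℝ)+2)*((x:ℝ)+1)*(hfun x:ℝ)*Sf x)
          ≤ (e (x+1) * ((x:ℝ)+1)) * (((x:ℝ)+1)*(x:ℝ)*Sf (x+2)*(hfun (x+2):ℝ)) :=
        mul_le_mul_of_nonneg_left (by linarith [K]) c3nn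
      have big : e (x+2) * Sf (x+1) * ((x:ℝ)+2) * ((hfun (x+2):ℝ) * (((x:ℝ)+1)*(x:ℝ)))
          ≤ e (x+1) * Sf (x+2) * ((x:ℝ)+1) * ((hfun (x+2):ℝ) * (((x:ℝ)+1)*(x:ℝ))) := by
        linarith [t1, t2, t3]
      have hposmul : (0:ℝ) < (hfun (x+2):ℝ) * (((x:ℝ)+1)*(x:ℝ)) :=
        mul_pos hfp (mul_pos (by linarith) hXpos)
      have final := le_of_mul_le_mul_right big hposmul
      refine ⟨hb, step_mono, ?_⟩
      have goal' : e (x+2) * Sf (x+1) * (((x:ℝ)+1)+1) ≤ e (x+1) * Sf (x+2) * ((x:ℝ)+1) := by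
        linarith [final]
      exact_mod_cast goal'
  have hSpos : ∀ n : ℕ, 2 ≤ n → 0 < Sf n := Sf_pos
  -- the decreasing sequence g n = e (n+19) (n+19) / Sf (n+19)
  set g : ℕ → ℝ := fun n => e (n+19) * ((n+19 : ℕ) : ℝ) / Sf (n+19) with hg
  have hant : Antitone g := by
    apply antitone_nat_of_succ_le
    intro n
    have inv := (main (n+19) (by omega)).2.2
    have hS1 := hSpos (n+19) (by omega)
    have hS2 := hSpos (n+19+1) (by omega)
    show e (n+1+19) * ((n+1+19 : ℕ) : ℝ) / Sf (n+1+19) ≤ e (n+19) * ((n+19 : ℕ) : ℝ) / Sf (n+19)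
    rw [show n+1+19 = (n+19)+1 by omega, div_le_div_iff₀ hS2 hS1]
    push_cast
    push_cast at inv
    linarith [inv]
  have hbdd : BddBelow (Set.range g) := by
    refine ⟨0, ?_⟩
    rintro y ⟨n, rfl⟩
    exact div_nonneg (mul_nonneg (main (n+19) (by omega)).1.le (Nat.cast_nonneg _))
      (hSpos (n+19) (by omega)).le
  have hconv : Filter.Tendsto g Filter.atTop (nhds (⨅ n, g n)) :=
    tendsto_atTop_ciInf hant hbdd
  refine ⟨⨅ n, g n, ?_, ?_⟩
  · have hle : (⨅ n, g n) ≤ g 0 := ciInf_le hbdd 0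
    have hg0 : g 0 = e 19 * ((19:ℕ):ℝ) / Sf 19 := by simp only [hg]
    have hlt : g 0 < 1/2 := by
      rw [hg0, Sfn 19 (by norm_num), E19]; norm_num
    linarith
  · have hr : Filter.Tendsto (fun x : ℕ => e x * (x:ℝ) / Sf x) Filter.atTop
        (nhds (⨅ n, g n)) :=
      (Filter.tendsto_add_atTop_iff_nat 19).1 hconv
    have hsq : Filter.Tendsto (fun x : ℕ => (x:ℝ)^2) Filter.atTop Filter.atTop :=
      (Filter.tendsto_pow_atTop two_ne_zero).comp tendsto_natCast_atTop_atTop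
    have hinv0 : Filter.Tendsto (fun x : ℕ => ((x:ℝ)^2)⁻¹) Filter.atTop (nhds 0) :=
      tendsto_inv_atTop_zero.comp hsq
    have hlow : Filter.Tendsto (fun x : ℕ => 1 - ((x:ℝ)^2)⁻¹) Filter.atTop (nhds 1) := by
      simpa using tendsto_const_nhds.sub hinv0
    have hratio : Filter.Tendsto (fun x : ℕ => Sf x / (x:ℝ)^2) Filter.atTop (nhds 1) := by
      apply tendsto_of_tendsto_of_tendsto_of_le_of_le' hlow tendsto_const_nhds
      · filter_upwards [Filter.eventually_ge_atTop 2] with x hx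
        have hx2 : (0:ℝ) < (x:ℝ)^2 := by
          have h2 : (2:ℝ) ≤ (x:ℝ) := by exact_mod_cast hx
          positivity
        rw [le_div_iff₀ hx2]
        have heq : (1 - ((x:ℝ)^2)⁻¹) * (x:ℝ)^2 = (x:ℝ)^2 - 1 := by field_simp
        rw [heq]
        unfold Sf; split <;> norm_num
      · filter_upwards [Filter.eventually_ge_atTop 2] with x hx
        have hx2 : (0:ℝ) < (x:ℝ)^2 := by
          have h2 : (2:ℝ) ≤ (x:ℝ) := by exact_mod_cast hx
          positivity
        rw [div_le_one hx2]
        unfold Sf; split <;> norm_num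
    have hmul := hr.mul hratio
    rw [mul_one] at hmul
    apply hmul.congr'
    filter_upwards [Filter.eventually_ge_atTop 2] with x hx
    have hS := (hSpos x hx).ne'
    have hx0 : (x:ℝ) ≠ 0 := by
      have h2 : (2:ℝ) ≤ (x:ℝ) := by exact_mod_cast hx
      linarith
    field_simp

end Stmt15
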